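/- Let n, k be positive integers with n ≡ k (mod 2), 1 ≤ k ≤ n−2, and let α be a real number with 0 ≤ α < 1. Then the A_α-spectral radius of the graph K_{(n−k)/2} ∨ \overline{K_{(n+k)/2}} equals (n−k−2+2αn)/4 + √((n−k−2+2αn)² + 4(n²−k²) − 4α(3n+k−2)(n−k))/4; in particular it is strictly greater than (n−k−2)/2. -/

import Mathlib

open scoped Classical

/-- The largest eigenvalue of a real square matrix. -/
noncomputable def maxEigenvalue {V : Type*} [Fintype V] (M : Matrix V V ℝ) : ℝ :=
  sSup {t : ℝ | Module.End.HasEigenvalue (Matrix.toLin' M) t}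

/-- The `A_α`-matrix `α•D(G) + (1-α)•A(G)` of a graph. -/
noncomputable def AalphaMatrix {V : Type*} [Fintype V] (α : ℝ) (G : SimpleGraph V) :
    Matrix V V ℝ :=
  α • Matrix.diagonal (fun v => (G.degree v : ℝ)) + (1 - α) • G.adjMatrix ℝ

/-- The `A_α`-spectral radius of a graph: the largest eigenvalue of its `A_α`-matrix. -/
noncomputable def rhoAlpha {V : Type*} [Fintype V] (α : ℝ) (G : SimpleGraph V) : ℝ :=
  maxEigenvalue (AalphaMatrix α G)

/-- The graph `K_m ∨ (K_{n-m})ᶜ` on `Fin n`: the first `m` vertices form a clique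
joined to everything and the remaining `n-m` vertices form an independent set. -/
def splitGraph (n m : ℕ) : SimpleGraph (Fin n) where
  Adj u v := u ≠ v ∧ ((u : ℕ) < m ∨ (v : ℕ) < m)
  symm := by
    constructor
    rintro u v ⟨h1, h2⟩
    exact ⟨h1.symm, by tauto⟩
  loopless := by
    constructor
    rintro u ⟨h, -⟩
    exact h rfl

/-- entrywise nonnegativity of the A_α matrix -/
lemma AalphaMatrix_nonneg {V : Type*} [Fintype V] (α : ℝ) (G : SimpleGraph V) (u v : V)
    (hα0 : 0 ≤ α) (hα1 : α < 1) : 0 ≤ (AalphaMatrix α G) u v := by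
  simp only [AalphaMatrix, Matrix.add_apply, Matrix.smul_apply, smul_eq_mul]
  have h1 : (0:ℝ) ≤ Matrix.diagonal (fun v => (G.degree v : ℝ)) u v := by
    rw [Matrix.diagonal_apply]; split <;> positivity
  have h2 : (0:ℝ) ≤ G.adjMatrix ℝ u v := by
    rw [SimpleGraph.adjMatrix_apply]; split <;> norm_num
  have := mul_nonneg hα0 h1
  have := mul_nonneg (by linarith : (0:ℝ) ≤ 1 - α) h2
  linarith

lemma AalphaMatrix_mulVec_apply {V : Type*} [Fintype V] (α : ℝ) (G : SimpleGraph V)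
    (z : V → ℝ) (u : V) :
    (AalphaMatrix α G).mulVec z u
      = α * ((G.degree u : ℝ) * z u) + (1-α) * ∑ w ∈ G.neighborFinset u, z w := by
  simp [AalphaMatrix, Matrix.add_mulVec, Matrix.smul_mulVec, Matrix.mulVec_diagonal,
    SimpleGraph.adjMatrix_mulVec_apply]

/-- Perron-type upper bound: if a matrix with nonnegative entries has a positive
eigenvector `z` with eigenvalue `ρ`, then every eigenvalue is at most `ρ`. -/
lemma eigenvalue_le_of_pos_eigenvector {n : ℕ} (M : Matrix (Fin n) (Fin n) ℝ)
    (hMnn : ∀ u v, 0 ≤ M u v) (z : Fin n → ℝ) (hzpos : ∀ v, 0 < z v) (ρ : ℝ)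
    (hMz : M.mulVec z = ρ • z) (t : ℝ)
    (ht : Module.End.HasEigenvalue (Matrix.toLin' M) t) : t ≤ ρ := by
  obtain ⟨v, hv⟩ := ht.exists_hasEigenvector
  have hv1 : M.mulVec v = t • v := by
    have := Module.End.mem_eigenspace_iff.mp hv.1
    rwa [Matrix.toLin'_apply] at this
  have hv0 : v ≠ 0 := hv.2
  have key : ∀ w : Fin n → ℝ, M.mulVec w = t • w → (∃ u, 0 < w u) → t ≤ ρ := by
    rintro w hw ⟨u1, hu1⟩
    obtain ⟨u0, -, hmax⟩ := Finset.exists_max_image Finset.univ (fun u => w u / z u)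
      ⟨u1, Finset.mem_univ _⟩
    set c := w u0 / z u0 with hc
    have hcpos : 0 < c := lt_of_lt_of_le (div_pos hu1 (hzpos u1)) (hmax u1 (Finset.mem_univ _))
    have hwle : ∀ u, w u ≤ c * z u := fun u =>
      (div_le_iff₀ (hzpos u)).mp (hmax u (Finset.mem_univ _))
    have hwu0 : w u0 = c * z u0 := by
      rw [hc, div_mul_cancel₀]; exact (hzpos u0).ne'
    have e1 : t * w u0 = ∑ v', M u0 v' * w v' := by
      have h := congrFun hw u0
      simp only [Matrix.mulVec, dotProduct, Pi.smul_apply, smul_eq_mul] at h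
      exact h.symm
    have e2 : ∑ v', M u0 v' * w v' ≤ ∑ v', M u0 v' * (c * z v') :=
      Finset.sum_le_sum (fun i _ => mul_le_mul_of_nonneg_left (hwle i) (hMnn u0 i))
    have e3 : ∑ v', M u0 v' * (c * z v') = c * (ρ * z u0) := by
      have h4 := congrFun hMz u0
      simp only [Matrix.mulVec, dotProduct, Pi.smul_apply, smul_eq_mul] at h4
      calc ∑ v', M u0 v' * (c * z v') = c * ∑ v', M u0 v' * z v' := by
            rw [Finset.mul_sum]; exact Finset.sum_congr rfl (by intros; ring)
        _ = c * (ρ * z u0) := by rw [h4]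
    have : t * (c * z u0) ≤ ρ * (c * z u0) := by
      calc t * (c * z u0) = t * w u0 := by rw [hwu0]
        _ ≤ c * (ρ * z u0) := by rw [e1]; exact e2.trans e3.le
        _ = ρ * (c * z u0) := by ring
    exact le_of_mul_le_mul_right this (mul_pos hcpos (hzpos u0))
  obtain ⟨u1, hu1⟩ := Function.ne_iff.mp hv0
  rcases (Ne.lt_or_gt hu1) with hlt | hgt
  · refine key (-v) ?_ ⟨u1, by simpa using hlt⟩
    rw [Matrix.mulVec_neg, hv1, ← smul_neg]
  · exact key v hv1 ⟨u1, hgt⟩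

theorem stmt_15 (n k : ℕ) (hk1 : 1 ≤ k) (hkn : k + 2 ≤ n) (hmod : n % 2 = k % 2)
    (α : ℝ) (hα0 : 0 ≤ α) (hα1 : α < 1) :
    rhoAlpha α (splitGraph n ((n - k) / 2)) =
        ((n : ℝ) - k - 2 + 2*α*n) / 4 +
          Real.sqrt (((n : ℝ) - k - 2 + 2*α*n)^2 + 4*((n : ℝ)^2 - (k : ℝ)^2)
            - 4*α*(3*(n : ℝ) + k - 2)*((n : ℝ) - k)) / 4 ∧
      ((n : ℝ) - k - 2) / 2 < rhoAlpha α (splitGraph n ((n - k) / 2)) := by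
  set m : ℕ := (n - k) / 2 with hmdef
  have h2m : 2 * m = n - k := by omega
  have hm1 : 1 ≤ m := by omega
  have hmn : m < n := by omega
  have hkR : (k:ℝ) ≤ n := by exact_mod_cast (by omega : k ≤ n)
  have hmR : 2 * (m:ℝ) = (n:ℝ) - k := by
    have h := congrArg (fun t : ℕ => (t:ℝ)) h2m
    simp only [Nat.cast_mul, Nat.cast_ofNat, Nat.cast_sub (by omega : k ≤ n)] at h
    exact h
  have hmval : (m:ℝ) = ((n:ℝ) - k)/2 := by linarith
  have hmRpos : (0:ℝ) < m := by exact_mod_cast hm1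
  have hmRlt : (m:ℝ) < n := by exact_mod_cast hmn
  have h1α : (0:ℝ) < 1 - α := by linarith
  have hnmpos : (0:ℝ) < (n:ℝ) - m := by linarith
  -- the constants
  set a : ℝ := α*((n:ℝ)-1) + (1-α)*((m:ℝ)-1) with ha
  set d : ℝ := α*(m:ℝ) with hd
  set b2 : ℝ := (1-α)^2*(m:ℝ)*((n:ℝ)-(m:ℝ)) with hb2
  have hb2pos : 0 < b2 := by rw [hb2]; positivity
  have hTnn : 0 ≤ (a-d)^2 + 4*b2 := by nlinarith [sq_nonneg (a-d)]
  set s : ℝ := Real.sqrt ((a-d)^2 + 4*b2) with hs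
  have hs2 : s^2 = (a-d)^2 + 4*b2 := Real.sq_sqrt hTnn
  have habs : |a - d| < s := by
    rw [hs, ← Real.sqrt_sq_eq_abs]
    exact Real.sqrt_lt_sqrt (sq_nonneg _) (by linarith)
  have h1le : a - d < s := (le_abs_self _).trans_lt habs
  have h2le : d - a < s := (le_abs_self (d-a)).trans_lt (by rwa [abs_sub_comm] at habs)
  set ρ : ℝ := (a+d)/2 + s/2 with hρ
  have hρa : a < ρ := by rw [hρ]; linarith
  have hρd : d < ρ := by rw [hρ]; linarith
  have hquad : (ρ - a)*(ρ - d) = b2 := by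
    have e : (ρ - a)*(ρ - d) = (s^2 - (a-d)^2)/4 := by rw [hρ]; ring
    rw [e, hs2]; ring
  set x : ℝ := (1-α)*((n:ℝ)-m) with hx
  set y : ℝ := ρ - a with hy
  have hxpos : 0 < x := by rw [hx]; positivity
  have hypos : 0 < y := by rw [hy]; linarith
  set z : Fin n → ℝ := fun v => if (v:ℕ) < m then x else y with hz
  have hzpos : ∀ v, 0 < z v := by
    intro v; rw [hz]; dsimp only; split
    · exact hxpos
    · exact hypos
  -- counting
  have hfilt : (Finset.univ.filter (fun v : Fin n => (v:ℕ) < m)).card = m := by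
    rw [show (Finset.univ.filter (fun v : Fin n => (v:ℕ) < m)) = (Finset.range m).attachFin
      (fun a ha => lt_of_lt_of_le (Finset.mem_range.mp ha) hmn.le) from ?_, Finset.card_attachFin,
      Finset.card_range]
    ext v; simp [Finset.mem_attachFin]
  have hsum : ∑ v : Fin n, z v = (m:ℝ)*x + ((n:ℝ)-m)*y := by
    rw [hz]
    rw [Finset.sum_ite, Finset.sum_const, Finset.sum_const, hfilt]
    have hcard2 : (Finset.univ.filter (fun v : Fin n => ¬ (v:ℕ) < m)).card = n - m := by
      have := Finset.card_filter_add_card_filter_not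
        (s := (Finset.univ : Finset (Fin n))) (p := fun v : Fin n => (v:ℕ) < m)
      rw [Finset.card_univ, Fintype.card_fin, hfilt] at this
      omega
    rw [hcard2, nsmul_eq_mul, nsmul_eq_mul, Nat.cast_sub hmn.le]
  -- degrees
  have hdeg1 : ∀ u : Fin n, (u:ℕ) < m → ((splitGraph n m).degree u : ℝ) = (n:ℝ) - 1 := by
    intro u hu
    have hN : (splitGraph n m).neighborFinset u = Finset.univ.erase u := by
      ext v
      simp only [SimpleGraph.mem_neighborFinset, Finset.mem_erase, Finset.mem_univ, and_true]
      constructor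
      · rintro ⟨hne, -⟩; exact hne.symm
      · intro h; exact ⟨h.symm, Or.inl hu⟩
    have hcard : (splitGraph n m).degree u = n - 1 := by
      rw [show (splitGraph n m).degree u = ((splitGraph n m).neighborFinset u).card from rfl, hN,
        Finset.card_erase_of_mem (Finset.mem_univ u), Finset.card_univ, Fintype.card_fin]
    rw [hcard, Nat.cast_sub (by omega), Nat.cast_one]
  have hdeg2 : ∀ u : Fin n, ¬ (u:ℕ) < m → ((splitGraph n m).degree u : ℝ) = (m:ℝ) := by
    intro u hu
    have hN : (splitGraph n m).neighborFinset u
        = Finset.univ.filter (fun v : Fin n => (v:ℕ) < m) := by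
      ext v
      simp only [SimpleGraph.mem_neighborFinset, Finset.mem_filter, Finset.mem_univ, true_and]
      constructor
      · rintro ⟨-, h2⟩; rcases h2 with h | h
        · omega
        · exact h
      · intro h; exact ⟨fun e => hu (by rw [e]; exact h), Or.inr h⟩
    rw [show (splitGraph n m).degree u = ((splitGraph n m).neighborFinset u).card from rfl, hN,
      hfilt]
  -- neighbor sums
  have hNsum1 : ∀ u : Fin n, (u:ℕ) < m →
      ∑ w ∈ (splitGraph n m).neighborFinset u, z w = ((m:ℝ)*x + ((n:ℝ)-m)*y) - x := by
    intro u hu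
    have hN : (splitGraph n m).neighborFinset u = Finset.univ.erase u := by
      ext v
      simp only [SimpleGraph.mem_neighborFinset, Finset.mem_erase, Finset.mem_univ, and_true]
      constructor
      · rintro ⟨hne, -⟩; exact hne.symm
      · intro h; exact ⟨h.symm, Or.inl hu⟩
    rw [hN, Finset.sum_erase_eq_sub (Finset.mem_univ u), hsum]
    congr 1
    simp only [hz]; exact if_pos hu
  have hNsum2 : ∀ u : Fin n, ¬ (u:ℕ) < m →
      ∑ w ∈ (splitGraph n m).neighborFinset u, z w = (m:ℝ)*x := by
    intro u hu
    have hN : (splitGraph n m).neighborFinset u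
        = Finset.univ.filter (fun v : Fin n => (v:ℕ) < m) := by
      ext v
      simp only [SimpleGraph.mem_neighborFinset, Finset.mem_filter, Finset.mem_univ, true_and]
      constructor
      · rintro ⟨-, h2⟩; rcases h2 with h | h
        · omega
        · exact h
      · intro h; exact ⟨fun e => hu (by rw [e]; exact h), Or.inr h⟩
    rw [hN]
    have : ∀ w ∈ Finset.univ.filter (fun v : Fin n => (v:ℕ) < m), z w = x := by
      intro w hw
      simp only [hz]
      exact if_pos (Finset.mem_filter.mp hw).2
    rw [Finset.sum_congr rfl this, Finset.sum_const, hfilt, nsmul_eq_mul]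
  -- the eigenvector equation
  have hMz : (AalphaMatrix α (splitGraph n m)).mulVec z = ρ • z := by
    funext u
    rw [AalphaMatrix_mulVec_apply]
    by_cases hu : (u:ℕ) < m
    · rw [hdeg1 u hu, hNsum1 u hu, show z u = x from by simp only [hz]; exact if_pos hu,
        show (ρ • z) u = ρ * x from by simp only [Pi.smul_apply, smul_eq_mul, hz]; rw [if_pos hu]]
      rw [hy, hx, ha]; ring
    · rw [hdeg2 u hu, hNsum2 u hu, show z u = y from by simp only [hz]; exact if_neg hu,
        show (ρ • z) u = ρ * y from by simp only [Pi.smul_apply, smul_eq_mul, hz]; rw [if_neg hu]]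
      have hq : (ρ - a) * (ρ - α*(m:ℝ)) = (1-α)^2*(m:ℝ)*((n:ℝ)-(m:ℝ)) := by
        rw [← hd, ← hb2]; exact hquad
      rw [hy, hx]
      linear_combination -hq
  -- ρ is an eigenvalue
  have hz0 : z ≠ 0 := by
    intro h
    have := congrFun h ⟨0, by omega⟩
    simp only [Pi.zero_apply] at this
    exact (hzpos _).ne' this
  have hev : Module.End.HasEigenvalue (Matrix.toLin' (AalphaMatrix α (splitGraph n m))) ρ := by
    refine Module.End.hasEigenvalue_of_hasEigenvector (x := z) ⟨?_, hz0⟩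
    rw [Module.End.mem_eigenspace_iff, Matrix.toLin'_apply, hMz]
  -- upper bound
  have hub : ∀ t ∈ {t : ℝ | Module.End.HasEigenvalue
      (Matrix.toLin' (AalphaMatrix α (splitGraph n m))) t}, t ≤ ρ := by
    intro t ht
    exact eigenvalue_le_of_pos_eigenvector _ (fun u v => AalphaMatrix_nonneg α _ u v hα0 hα1)
      z hzpos ρ hMz t ht
  have hval : rhoAlpha α (splitGraph n m) = ρ := by
    rw [rhoAlpha, maxEigenvalue]
    exact le_antisymm (csSup_le ⟨ρ, hev⟩ hub) (le_csSup ⟨ρ, hub⟩ hev)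
  rw [hval]
  constructor
  · -- the closed formula
    have hS : ((n : ℝ) - k - 2 + 2*α*n)^2 + 4*((n : ℝ)^2 - (k : ℝ)^2)
        - 4*α*(3*(n : ℝ) + k - 2)*((n : ℝ) - k) = 4 * ((a-d)^2 + 4*b2) := by
      rw [ha, hd, hb2, hmval]; ring
    have hsqrt : Real.sqrt (((n : ℝ) - k - 2 + 2*α*n)^2 + 4*((n : ℝ)^2 - (k : ℝ)^2)
        - 4*α*(3*(n : ℝ) + k - 2)*((n : ℝ) - k)) = 2 * s := by
      rw [hS, show (4:ℝ) * ((a-d)^2 + 4*b2)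
          = (2 * Real.sqrt ((a-d)^2 + 4*b2))^2 by
            rw [mul_pow, Real.sq_sqrt hTnn]; ring,
        Real.sqrt_sq (by positivity), hs]
    rw [hsqrt, hρ, ha, hd, hmval]
    ring
  · -- strict lower bound
    have hlow : ((n:ℝ) - k - 2)/2 ≤ a := by
      have hnn : (0:ℝ) ≤ α * ((n:ℝ) - (m:ℝ)) := mul_nonneg hα0 (by linarith only [hmRlt])
      rw [ha]
      linarith only [hnn, hmR]
    exact lt_of_le_of_lt hlow hρa
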